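/- Let n ≥ 2. Every non-abelian group H of order 16 whose non-commuting graph is considered satisfies: Γ_H is isomorphic to either the complete 5-partite graph K with four parts of size 2 and one part of size 6, or the complete tripartite graph with three parts of size 4. -/

import Mathlib

/-- The non-commuting graph of a group `G`. -/
def ncGraph (G : Type*) [Group G] : SimpleGraph {x : G // x ∉ Subgroup.center G} where
  Adj x y := (x : G) * y ≠ (y : G) * x
  symm := ⟨fun _ _ h e => h e.symm⟩
  loopless := ⟨fun _ h => h rfl⟩

open Subgroup

lemma comm_of_quot_cyclic {K : Type*} [Group K] (hc : IsCyclic (K ⧸ center K)) :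
    ∀ a b : K, a * b = b * a :=
  commutative_of_cyclic_center_quotient (QuotientGroup.mk' _) (le_of_eq (QuotientGroup.ker_mk' _))

lemma comm_of_center_index_le_two {K : Type*} [Group K] [Finite K]
    (h : Nat.card (K ⧸ center K) ≤ 2) : ∀ a b : K, a * b = b * a := by
  have h1 : 0 < Nat.card (K ⧸ center K) := Nat.card_pos
  interval_cases h' : Nat.card (K ⧸ center K)
  · exact comm_of_quot_cyclic (by
      have : Subsingleton (K ⧸ center K) := (Nat.card_eq_one_iff_unique.mp h').1
      infer_instance)
  · exact comm_of_quot_cyclic (isCyclic_of_prime_card h')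


noncomputable def ncgraph_iso_of_setoid {V ι : Type*} (f : ι → Type*) (G : SimpleGraph V) (s : Setoid V)
    (hadj : ∀ a b : V, G.Adj a b ↔ ¬ s.r a b) (qe : Quotient s ≃ ι)
    (fe : ∀ c : Quotient s, {y : V // Quotient.mk s y = c} ≃ f (qe c)) :
    G ≃g SimpleGraph.completeMultipartiteGraph f := by
  refine ⟨(Equiv.sigmaFiberEquiv (Quotient.mk s)).symm.trans (Equiv.sigmaCongr qe fe), @fun a b => ?_⟩
  have key : ∀ v : V, (((Equiv.sigmaFiberEquiv (Quotient.mk s)).symm.trans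
      (Equiv.sigmaCongr qe fe)) v).1 = qe (Quotient.mk s v) := fun v => rfl
  simp only [Equiv.toFun_as_coe, SimpleGraph.comap_adj, SimpleGraph.top_adj, key a, key b, hadj]
  constructor
  · intro h hr
    exact h (congrArg qe (Quotient.sound hr))
  · intro h he
    exact h (Quotient.exact (qe.injective he))

lemma sum_fiber_card {W : Type*} [Fintype W] (s : Setoid W) [DecidableEq (Quotient s)]
    [Fintype (Quotient s)] :
    ∑ c : Quotient s, Nat.card {y : W // Quotient.mk s y = c} = Nat.card W := by
  classical
  rw [Nat.card_eq_fintype_card,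
    ← Fintype.card_congr (Equiv.sigmaFiberEquiv (Quotient.mk s)), Fintype.card_sigma]
  simp [Nat.card_eq_fintype_card]

section main
variable {H : Type*} [Group H] [Fintype H]

lemma center_card (h16 : Fintype.card H = 16) (hH : ∃ a b : H, a * b ≠ b * a) :
    Nat.card (center H) = 2 ∨ Nat.card (center H) = 4 := by
  obtain ⟨a, b, hab⟩ := hH
  have hcard : Nat.card H = 16 := by rw [Nat.card_eq_fintype_card, h16]
  have hdvd : Nat.card (center H) ∣ 16 := hcard ▸ card_subgroup_dvd_card (center H)
  have hnt : Nontrivial H := Fintype.one_lt_card_iff_nontrivial.mp (by omega)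
  have hp : IsPGroup 2 H := IsPGroup.of_card (n := 4) (by rw [hcard]; norm_num)
  have h2 : 2 ≤ Nat.card (center H) :=
    Finite.one_lt_card_iff_nontrivial.mpr hp.center_nontrivial
  have h16' : Nat.card (center H) ≠ 16 := by
    intro h
    have : center H = ⊤ := eq_top_of_card_eq _ (h.trans hcard.symm)
    exact hab ((Subgroup.mem_center_iff.mp (this ▸ mem_top a) b)).symm
  have h8 : Nat.card (center H) ≠ 8 := by
    intro h
    have hmi := card_mul_index (center H)
    rw [h, hcard] at hmi
    have hq : Nat.card (H ⧸ center H) ≤ 2 := by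
      rw [← index_eq_card]; omega
    exact hab (comm_of_center_index_le_two hq a b)
  have hle : Nat.card (center H) ≤ 16 := Nat.le_of_dvd (by norm_num) hdvd
  generalize hz : Nat.card (center H) = z at hdvd h2 h16' h8 hle ⊢
  interval_cases z <;> omega


lemma centralizer_card (h16 : Fintype.card H = 16) (hH : ∃ a b : H, a * b ≠ b * a)
    {x : H} (hx : x ∉ center H) :
    Nat.card (centralizer ({x} : Set H)) = 2 * Nat.card (center H) ∨
      Nat.card (centralizer ({x} : Set H)) = 8 := by
  have hcard : Nat.card H = 16 := by rw [Nat.card_eq_fintype_card, h16]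
  have hz := center_card h16 hH
  have hxK : x ∈ centralizer ({x} : Set H) := mem_centralizer_singleton_iff.mpr rfl
  have hZK : center H ≤ centralizer ({x} : Set H) := center_le_centralizer {x}
  have hdvd : Nat.card (centralizer ({x} : Set H)) ∣ 16 :=
    hcard ▸ card_subgroup_dvd_card _
  have h16' : Nat.card (centralizer ({x} : Set H)) ≠ 16 := by
    intro h
    have : centralizer ({x} : Set H) = ⊤ := eq_top_of_card_eq _ (h.trans hcard.symm)
    exact hx (centralizer_eq_top_iff_subset.mp this rfl)
  have hzd : Nat.card (center H) ∣ Nat.card (centralizer ({x} : Set H)) :=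
    card_dvd_of_le hZK
  have hne : Nat.card (center H) ≠ Nat.card (centralizer ({x} : Set H)) := by
    intro h
    exact hx ((eq_of_le_of_card_ge hZK h.ge) ▸ hxK)
  have hle : Nat.card (centralizer ({x} : Set H)) ≤ 16 := Nat.le_of_dvd (by norm_num) hdvd
  generalize hk : Nat.card (centralizer ({x} : Set H)) = k at hdvd h16' hzd hne hle ⊢
  rcases hz with hz | hz <;> rw [hz] at hzd hne ⊢ <;> interval_cases k <;> omega

lemma centralizer_comm (h16 : Fintype.card H = 16) (hH : ∃ a b : H, a * b ≠ b * a)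
    {x : H} (hx : x ∉ center H) :
    ∀ a b : ↥(centralizer ({x} : Set H)), a * b = b * a := by
  set K := centralizer ({x} : Set H) with hK
  have hcard : Nat.card H = 16 := by rw [Nat.card_eq_fintype_card, h16]
  have hz := center_card h16 hH
  have hxK : x ∈ K := mem_centralizer_singleton_iff.mpr rfl
  have hZK : center H ≤ K := center_le_centralizer {x}
  -- the center of H sits inside the center of K
  have h1 : (center H).subgroupOf K ≤ center K := by
    intro g hg
    rw [mem_subgroupOf] at hg
    rw [Subgroup.mem_center_iff]
    intro k
    exact Subtype.ext (Subgroup.mem_center_iff.mp hg (k : H))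
  have hxM : (⟨x, hxK⟩ : K) ∈ center K := by
    rw [Subgroup.mem_center_iff]
    intro k
    exact Subtype.ext (mem_centralizer_singleton_iff.mp k.2)
  -- card bounds
  have hcZ : Nat.card ((center H).subgroupOf K) = Nat.card (center H) :=
    Nat.card_congr (subgroupOfEquivOfLe hZK).toEquiv
  have hd1 : Nat.card ((center H).subgroupOf K) ∣ Nat.card (center K) :=
    card_dvd_of_le h1
  have hne1 : Nat.card ((center H).subgroupOf K) ≠ Nat.card (center K) := by
    intro h
    have heq := eq_of_le_of_card_ge h1 h.ge
    rw [← heq, mem_subgroupOf] at hxM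
    exact hx hxM
  have hMK : Nat.card (center K) ∣ Nat.card K := card_subgroup_dvd_card _
  have hKcard := centralizer_card h16 hH hx
  rw [← hK] at hKcard
  -- 2 * |Z| ≤ |M|
  have hM2 : 2 * Nat.card (center H) ≤ Nat.card (center K) := by
    rw [hcZ] at hd1 hne1
    obtain ⟨t, ht⟩ := hd1
    have hZpos : 0 < Nat.card (center H) := Nat.card_pos
    have hMpos : 0 < Nat.card (center K) := Nat.card_pos
    rcases t with _ | _ | t
    · omega
    · omega
    · nlinarith
  -- index of center K in K is at most 2
  have hq : Nat.card (K ⧸ center K) ≤ 2 := by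
    have hmi := card_mul_index (center K)
    rw [index_eq_card] at hmi
    have hKle : Nat.card K ≤ 4 * Nat.card (center H) := by
      rcases hz with hz | hz <;> rcases hKcard with h | h <;> omega
    have h2 : Nat.card (center K) * Nat.card (K ⧸ center K) ≤ Nat.card (center K) * 2 :=
      calc Nat.card (center K) * Nat.card (K ⧸ center K) = Nat.card K := hmi
        _ ≤ 2 * Nat.card (center K) := by omega
        _ = Nat.card (center K) * 2 := Nat.mul_comm _ _
    exact Nat.le_of_mul_le_mul_left h2 Nat.card_pos
  exact comm_of_center_index_le_two hq


open Finset in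
lemma card_mem_not_mem {A B : Subgroup H} (hAB : A ≤ B) :
    Nat.card {y : H // y ∈ B ∧ y ∉ A} = Nat.card B - Nat.card A := by
  classical
  rw [Nat.card_eq_fintype_card, Fintype.card_subtype]
  have hB : Nat.card B = (Finset.univ.filter (fun y : H => y ∈ B)).card := by
    rw [Nat.card_eq_fintype_card, Fintype.card_subtype]
  have hA : Nat.card A = (Finset.univ.filter (fun y : H => y ∈ A)).card := by
    rw [Nat.card_eq_fintype_card, Fintype.card_subtype]
  have hss : (Finset.univ.filter (fun y : H => y ∈ A)) ⊆
      (Finset.univ.filter (fun y : H => y ∈ B)) := by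
    intro y hy
    simp only [Finset.mem_filter, Finset.mem_univ, true_and] at *
    exact hAB hy
  have : Finset.univ.filter (fun y : H => y ∈ B ∧ y ∉ A) =
      Finset.univ.filter (fun y : H => y ∈ B) \ Finset.univ.filter (fun y : H => y ∈ A) := by
    ext y
    simp only [Finset.mem_filter, Finset.mem_univ, true_and, Finset.mem_sdiff]
  rw [this, Finset.card_sdiff_of_subset hss, hA, hB]

lemma card_noncentral (h16 : Fintype.card H = 16) :
    Nat.card {y : H // y ∉ center H} = 16 - Nat.card (center H) := by
  classical
  have : Nat.card {y : H // y ∉ center H} = Nat.card {y : H // y ∈ (⊤ : Subgroup H) ∧ y ∉ center H} := by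
    apply Nat.card_congr
    exact Equiv.subtypeEquivRight (by intro y; simp)
  rw [this, card_mem_not_mem le_top]
  have htop : Nat.card (⊤ : Subgroup H) = 16 := by
    rw [card_top, Nat.card_eq_fintype_card, h16]
  rw [htop]


lemma conj_card (h16 : Fintype.card H = 16) (x : H) :
    Nat.card {y : H // IsConj x y} * Nat.card (centralizer ({x} : Set H)) = 16 := by
  classical
  have e1 : {y : H // IsConj x y} ≃ MulAction.orbit (ConjAct H) x :=
    Equiv.subtypeEquivRight (fun y => by rw [ConjAct.mem_orbit_conjAct, isConj_comm])
  have e2 : ↥(centralizer ({x} : Set H)) ≃ ↥(MulAction.stabilizer (ConjAct H) x) :=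
    Equiv.subtypeEquiv ConjAct.toConjAct.toEquiv (fun g => by
      simp only [MulAction.mem_stabilizer_iff, mem_centralizer_singleton_iff, ConjAct.smul_def,
        MulEquiv.coe_toEquiv, ConjAct.ofConjAct_toConjAct, mul_inv_eq_iff_eq_mul]
      first
      | exact Iff.rfl
      | exact ⟨fun h => h.symm, fun h => h.symm⟩)
  have e3 := MulAction.orbitProdStabilizerEquivGroup (ConjAct H) x
  have h3 := Nat.card_congr e3
  rw [Nat.card_prod] at h3
  rw [Nat.card_congr e1, Nat.card_congr e2, h3, Nat.card_congr ConjAct.ofConjAct.toEquiv,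
    Nat.card_eq_fintype_card, h16]


lemma big_unique (h16 : Fintype.card H = 16) (hH : ∃ a b : H, a * b ≠ b * a)
    (hz : Nat.card (center H) = 2) {x y : H} (hx : x ∉ center H) (hy : y ∉ center H)
    (hcx : Nat.card (centralizer ({x} : Set H)) = 8)
    (hcy : Nat.card (centralizer ({y} : Set H)) = 8) :
    x * y = y * x := by
  classical
  have hcard : Nat.card H = 16 := by rw [Nat.card_eq_fintype_card, h16]
  by_contra hxy
  have hyK : y ∉ centralizer ({x} : Set H) := fun h => hxy (mem_centralizer_singleton_iff.mp h).symm
  have hsup : centralizer ({x} : Set H) ⊔ centralizer ({y} : Set H) = ⊤ := by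
    have hd : (8 : ℕ) ∣
        Nat.card ((centralizer ({x} : Set H) ⊔ centralizer ({y} : Set H) : Subgroup H)) :=
      hcx ▸ card_dvd_of_le le_sup_left
    have hd2 : Nat.card ((centralizer ({x} : Set H) ⊔ centralizer ({y} : Set H) : Subgroup H)) ∣
        16 := hcard ▸ card_subgroup_dvd_card _
    obtain ⟨t, ht⟩ := hd
    have hle := Nat.le_of_dvd (by norm_num) hd2
    have hpos : 0 < Nat.card
        ((centralizer ({x} : Set H) ⊔ centralizer ({y} : Set H) : Subgroup H)) := Nat.card_pos
    have h816 : Nat.card ((centralizer ({x} : Set H) ⊔ centralizer ({y} : Set H) :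
        Subgroup H)) = 8 ∨
        Nat.card ((centralizer ({x} : Set H) ⊔ centralizer ({y} : Set H) : Subgroup H)) = 16 := by
      omega
    rcases h816 with h8 | h16'
    · exfalso
      have heq : centralizer ({x} : Set H) =
          centralizer ({x} : Set H) ⊔ centralizer ({y} : Set H) :=
        eq_of_le_of_card_ge le_sup_left (by omega)
      have hymem : y ∈ centralizer ({x} : Set H) := by
        rw [heq]
        exact SetLike.le_def.mp le_sup_right (mem_centralizer_singleton_iff.mpr rfl)
      exact hyK hymem
    · exact eq_top_of_card_eq _ (h16'.trans hcard.symm)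
  have hsub : centralizer ({x} : Set H) ⊓ centralizer ({y} : Set H) ≤ center H := by
    intro g hg
    rw [Subgroup.mem_inf] at hg
    rw [Subgroup.mem_center_iff]
    intro a
    have hCg : centralizer ({x} : Set H) ⊔ centralizer ({y} : Set H) ≤
        centralizer ({g} : Set H) := by
      apply sup_le
      · intro a' ha'
        rw [mem_centralizer_singleton_iff]
        exact congrArg Subtype.val (centralizer_comm h16 hH hx ⟨a', ha'⟩ ⟨g, hg.1⟩)
      · intro a' ha'
        rw [mem_centralizer_singleton_iff]
        exact congrArg Subtype.val (centralizer_comm h16 hH hy ⟨a', ha'⟩ ⟨g, hg.2⟩)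
    have hmem := hCg (hsup ▸ mem_top a)
    exact mem_centralizer_singleton_iff.mp hmem
  have hinf : 4 ≤ Nat.card
      ((centralizer ({x} : Set H) ⊓ centralizer ({y} : Set H) : Subgroup H)) := by
    have hix : (centralizer ({x} : Set H)).index = 2 := by
      have h := card_mul_index (centralizer ({x} : Set H)); rw [hcx, hcard] at h; omega
    have hiy : (centralizer ({y} : Set H)).index = 2 := by
      have h := card_mul_index (centralizer ({y} : Set H)); rw [hcy, hcard] at h; omega
    have h1 := @index_inf_le H _ (centralizer ({x} : Set H)) (centralizer ({y} : Set H))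
    rw [hix, hiy] at h1
    have h2 := card_mul_index (centralizer ({x} : Set H) ⊓ centralizer ({y} : Set H))
    rw [hcard] at h2
    have h3 := Nat.mul_le_mul_left
      (Nat.card ((centralizer ({x} : Set H) ⊓ centralizer ({y} : Set H) : Subgroup H))) h1
    omega
  have hZle := card_le_of_le hsub
  rw [hz] at hZle
  omega

lemma fiber_card_comm (h16 : Fintype.card H = 16) (hH : ∃ a b : H, a * b ≠ b * a)
    (s : Setoid {x : H // x ∉ center H})
    (hs : ∀ a b : {x : H // x ∉ center H}, s.r a b ↔ (a : H) * b = b * a)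
    (x : {x : H // x ∉ center H}) :
    Nat.card {y : {x : H // x ∉ center H} // Quotient.mk s y = Quotient.mk s x} =
      Nat.card (centralizer ({(x : H)} : Set H)) - Nat.card (center H) := by
  classical
  have e1 : {y : {x : H // x ∉ center H} // Quotient.mk s y = Quotient.mk s x} ≃
      {y : {x : H // x ∉ center H} // (y : H) * x = x * y} :=
    Equiv.subtypeEquivRight (fun y => by rw [Quotient.eq]; exact hs y x)
  have e2 := Equiv.subtypeSubtypeEquivSubtypeInter
    (fun y : H => y ∉ center H) (fun y : H => y * x = x * y)
  have e3 : {y : H // y ∉ center H ∧ y * (x : H) = x * y} ≃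
      {y : H // y ∈ centralizer ({(x : H)} : Set H) ∧ y ∉ center H} :=
    Equiv.subtypeEquivRight (fun y =>
      ⟨fun ⟨h1, h2⟩ => ⟨mem_centralizer_singleton_iff.mpr h2, h1⟩,
       fun ⟨h1, h2⟩ => ⟨h2, mem_centralizer_singleton_iff.mp h1⟩⟩)
  rw [Nat.card_congr (((e1.trans e2).trans e3)),
    card_mem_not_mem (center_le_centralizer {(x : H)})]

theorem stmt_19' (H : Type*) [Group H] [Fintype H]
    (h16 : Fintype.card H = 16) (hH : ∃ a b : H, a * b ≠ b * a) :
    Nonempty (ncGraph H ≃g SimpleGraph.completeMultipartiteGraph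
        (fun i : Fin 5 => if (i : ℕ) < 4 then Fin 2 else Fin 6)) ∨
    Nonempty (ncGraph H ≃g SimpleGraph.completeMultipartiteGraph
        (fun _ : Fin 3 => Fin 4)) := by
  classical
  have hcard : Nat.card H = 16 := by rw [Nat.card_eq_fintype_card, h16]
  have hz := center_card h16 hH
  -- the commuting setoid on noncentral elements
  have htrans : ∀ a b c : {x : H // x ∉ center H},
      (a : H) * b = b * a → (b : H) * c = c * b → (a : H) * c = c * a := by
    intro a b c hab hbc
    have ha : (a : H) ∈ centralizer ({(b : H)} : Set H) :=
      mem_centralizer_singleton_iff.mpr hab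
    have hc : (c : H) ∈ centralizer ({(b : H)} : Set H) :=
      mem_centralizer_singleton_iff.mpr hbc.symm
    exact congrArg Subtype.val (centralizer_comm h16 hH b.2 ⟨a, ha⟩ ⟨c, hc⟩)
  set s : Setoid {x : H // x ∉ center H} :=
    ⟨fun a b => (a : H) * b = b * a,
     ⟨fun a => rfl, fun h => h.symm, fun h1 h2 => htrans _ _ _ h1 h2⟩⟩ with hsdef
  have hs : ∀ a b : {x : H // x ∉ center H}, s.r a b ↔ (a : H) * b = b * a := fun a b => Iff.rfl
  have hadj : ∀ a b : {x : H // x ∉ center H}, (ncGraph H).Adj a b ↔ ¬ s.r a b :=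
    fun a b => Iff.rfl
  have hsum := sum_fiber_card s
  rw [card_noncentral h16] at hsum
  rcases hz with hz | hz
  · -- |Z| = 2 : K_{2,2,2,2,6}
    left
    -- existence of an element with centralizer of order 8
    have hex : ∃ x : {x : H // x ∉ center H},
        Nat.card (centralizer ({(x : H)} : Set H)) = 8 := by
      by_contra hno
      push_neg at hno
      have hall : ∀ x : {x : H // x ∉ center H},
          Nat.card (centralizer ({(x : H)} : Set H)) = 4 := by
        intro x
        rcases centralizer_card h16 hH x.2 with h | h
        · rw [hz] at h; exact h
        · exact absurd h (hno x)
      set t : Setoid {x : H // x ∉ center H} :=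
        ⟨fun a b => IsConj (a : H) (b : H),
         ⟨fun a => IsConj.refl _, IsConj.symm, IsConj.trans⟩⟩ with htdef
      have tfib : ∀ x : {x : H // x ∉ center H},
          Nat.card {y : {x : H // x ∉ center H} // Quotient.mk t y = Quotient.mk t x} = 4 := by
        intro x
        have e1 : {y : {x : H // x ∉ center H} // Quotient.mk t y = Quotient.mk t x} ≃
            {y : {x : H // x ∉ center H} // IsConj (y : H) (x : H)} :=
          Equiv.subtypeEquivRight (fun y => by rw [Quotient.eq]; exact Iff.rfl)
        have e2 := Equiv.subtypeSubtypeEquivSubtypeInter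
          (fun y : H => y ∉ center H) (fun y : H => IsConj y (x : H))
        have e3 : {y : H // y ∉ center H ∧ IsConj y (x : H)} ≃ {y : H // IsConj (x : H) y} := by
          apply Equiv.subtypeEquivRight
          intro y
          constructor
          · exact fun ⟨_, h2⟩ => h2.symm
          · intro h
            refine ⟨fun hyZ => ?_, h.symm⟩
            obtain ⟨c, hc⟩ := isConj_iff.mp h.symm
            rw [Subgroup.mem_center_iff.mp hyZ c, mul_inv_cancel_right] at hc
            exact x.2 (hc ▸ hyZ)
        have hcount := conj_card h16 (x : H)
        rw [hall x] at hcount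
        rw [Nat.card_congr ((e1.trans e2).trans e3)]
        omega
      have hsum2 := sum_fiber_card t
      rw [card_noncentral h16, hz] at hsum2
      have : ∀ c : Quotient t, Nat.card
          {y : {x : H // x ∉ center H} // Quotient.mk t y = c} = 4 := by
        intro c
        obtain ⟨x, rfl⟩ := Quotient.exists_rep c
        exact tfib x
      rw [Finset.sum_congr rfl (fun c _ => this c), Finset.sum_const, smul_eq_mul] at hsum2
      omega
    obtain ⟨x0, hx0⟩ := hex
    -- uniqueness of the large class
    have huniq : ∀ y : {x : H // x ∉ center H},
        Nat.card (centralizer ({(y : H)} : Set H)) = 8 → s.r y x0 := by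
      intro y hy
      exact big_unique h16 hH hz y.2 x0.2 hy hx0
    -- fiber cards
    have hfib : ∀ c : Quotient s, Nat.card
        {y : {x : H // x ∉ center H} // Quotient.mk s y = c} = 2 ∨ Nat.card
        {y : {x : H // x ∉ center H} // Quotient.mk s y = c} = 6 := by
      intro c
      obtain ⟨x, rfl⟩ := Quotient.exists_rep c
      rw [fiber_card_comm h16 hH s hs x, hz]
      rcases centralizer_card h16 hH x.2 with h | h
      · left; rw [h, hz]
      · right; rw [h]
    have hfib6 : Nat.card {y : {x : H // x ∉ center H} //
        Quotient.mk s y = Quotient.mk s x0} = 6 := by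
      rw [fiber_card_comm h16 hH s hs x0, hx0, hz]
    have hfib2 : ∀ c : Quotient s, c ≠ Quotient.mk s x0 → Nat.card
        {y : {x : H // x ∉ center H} // Quotient.mk s y = c} = 2 := by
      intro c hc
      obtain ⟨x, rfl⟩ := Quotient.exists_rep c
      rw [fiber_card_comm h16 hH s hs x, hz]
      rcases centralizer_card h16 hH x.2 with h | h
      · rw [h, hz]
      · exact absurd (Quotient.sound (huniq x h)) hc
    -- number of classes is 5
    have hQ5 : Fintype.card (Quotient s) = 5 := by
      rw [hz] at hsum
      rw [← Finset.add_sum_erase _ _ (Finset.mem_univ (Quotient.mk s x0)), hfib6] at hsum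
      rw [Finset.sum_congr rfl
        (fun c hc => hfib2 c (Finset.ne_of_mem_erase hc)), Finset.sum_const, smul_eq_mul,
        Finset.card_erase_of_mem (Finset.mem_univ _), Finset.card_univ] at hsum
      have hne : Nonempty (Quotient s) := ⟨Quotient.mk s x0⟩
      have : 0 < Fintype.card (Quotient s) := Fintype.card_pos
      omega
    set qe0 : Quotient s ≃ Fin 5 := Fintype.equivFinOfCardEq hQ5 with hqe0
    set qe : Quotient s ≃ Fin 5 := qe0.trans (Equiv.swap (qe0 (Quotient.mk s x0)) 4) with hqe
    have hqec0 : qe (Quotient.mk s x0) = 4 := by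
      simp [hqe, Equiv.swap_apply_left]
    refine ⟨ncgraph_iso_of_setoid _ (ncGraph H) s hadj qe (fun c => ?_)⟩
    by_cases hc : c = Quotient.mk s x0
    · subst hc
      have htyp : (if ((qe (Quotient.mk s x0) : Fin 5) : ℕ) < 4 then Fin 2 else Fin 6) = Fin 6 := by
        rw [hqec0, if_neg (show ¬(((4 : Fin 5) : ℕ) < 4) by decide)]
      refine (Fintype.equivOfCardEq ?_).trans (Equiv.cast htyp.symm)
      rw [← Nat.card_eq_fintype_card, hfib6, Fintype.card_fin]
    · have hne4 : qe c ≠ 4 := fun h => hc (qe.injective (h.trans hqec0.symm))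
      have hlt : ((qe c : Fin 5) : ℕ) < 4 := by
        have h5 := (qe c).2
        have : ((qe c : Fin 5) : ℕ) ≠ 4 := fun h => hne4 (Fin.ext h)
        omega
      have htyp : (if ((qe c : Fin 5) : ℕ) < 4 then Fin 2 else Fin 6) = Fin 2 := by
        rw [if_pos hlt]
      refine (Fintype.equivOfCardEq ?_).trans (Equiv.cast htyp.symm)
      rw [← Nat.card_eq_fintype_card, hfib2 c hc, Fintype.card_fin]
  · -- |Z| = 4 : K_{4,4,4}
    right
    have hfib : ∀ c : Quotient s, Nat.card
        {y : {x : H // x ∉ center H} // Quotient.mk s y = c} = 4 := by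
      intro c
      obtain ⟨x, rfl⟩ := Quotient.exists_rep c
      rw [fiber_card_comm h16 hH s hs x, hz]
      rcases centralizer_card h16 hH x.2 with h | h
      · rw [h, hz]
      · rw [h]
    have hQ3 : Fintype.card (Quotient s) = 3 := by
      rw [hz] at hsum
      rw [Finset.sum_congr rfl (fun c _ => hfib c), Finset.sum_const, smul_eq_mul,
        Finset.card_univ] at hsum
      omega
    refine ⟨ncgraph_iso_of_setoid _ (ncGraph H) s hadj (Fintype.equivFinOfCardEq hQ3)
      (fun c => Fintype.equivOfCardEq ?_)⟩
    rw [← Nat.card_eq_fintype_card, hfib c, Fintype.card_fin]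

end main


theorem stmt_19 (H : Type*) [Group H] [Fintype H]
    (h16 : Fintype.card H = 16) (hH : ∃ a b : H, a * b ≠ b * a) :
    Nonempty (ncGraph H ≃g SimpleGraph.completeMultipartiteGraph
        (fun i : Fin 5 => if (i : ℕ) < 4 then Fin 2 else Fin 6)) ∨
    Nonempty (ncGraph H ≃g SimpleGraph.completeMultipartiteGraph
        (fun _ : Fin 3 => Fin 4)) := by
  exact stmt_19' H h16 hH
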